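/- Let z ∈ ℂ, R > 0, let h : B(z,2R) → ℂ be analytic and injective, and let U be a connected open set with z ∈ U, U ⊆ B(z,2R) and diam U ≤ R. If sup_{x,y ∈ B(z,2R)} |h'(x)/h'(y)| ≤ D, then diam U ≤ D·|h'(z)|^{-1}·diam h(U); equivalently, |h'(z)|·diam U ≤ D·diam h(U). -/

import Mathlib

open Set Metric

noncomputable section

set_option maxHeartbeats 2000000
/-- Key inverse-Lipschitz estimate along a segment, via a sup/continuity argument. -/
lemma key_dist_le (z : ℂ) (R : ℝ) (hR : 0 < R) (h : ℂ → ℂ) (m : ℝ) (hm : 0 < m)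
    (hana : DifferentiableOn ℂ h (Metric.ball z (2 * R)))
    (hinj : Set.InjOn h (Metric.ball z (2 * R)))
    (hlow : ∀ w ∈ Metric.ball z (2 * R), m ≤ ‖deriv h w‖)
    (x y : ℂ) (hx : dist x z ≤ R) (hy : dist y z ≤ R) (hxy : dist x y ≤ R) :
    m * dist x y ≤ dist (h x) (h y) := by
  have hR2 : R < 2 * R := by linarith
  have hxball : x ∈ Metric.ball z (2 * R) := by
    simp only [Metric.mem_ball]; linarith
  have hyball : y ∈ Metric.ball z (2 * R) := by
    simp only [Metric.mem_ball]; linarith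
  set d : ℝ := dist (h x) (h y) with hd
  set L : ℝ := d / m with hL
  have hd0 : 0 ≤ d := dist_nonneg
  -- reduce to `dist x y ≤ L`
  suffices hsuff : dist x y ≤ L by
    calc m * dist x y ≤ m * L := by nlinarith
    _ = d := by rw [hL]; field_simp [hm.ne']
  by_cases hcase : dist x y ≤ L
  · exact hcase
  push_neg at hcase
  -- then h x ≠ h y, d > 0
  have hdpos : 0 < d := by
    rcases lt_or_eq_of_le hd0 with h' | h'
    · exact h'
    · exfalso
      have hxy0 : h x = h y := by
        rw [← dist_eq_zero]; exact h'.symm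
      have : x = y := hinj hxball hyball hxy0
      rw [this, dist_self] at hcase
      have : (0:ℝ) ≤ L := by positivity
      linarith
  have hLpos : 0 < L := by positivity
  have hLR : L < R := lt_of_lt_of_le hcase hxy
  -- main claim for every small ε
  have main : ∀ ε : ℝ, 0 < ε → (1 + ε) * L < R → dist x y ≤ (1 + ε) * L := by
    intro ε hε hεR
    set Δ : ℂ := h y - h x with hΔ
    have hΔnorm : ‖Δ‖ = d := by
      rw [hΔ, hd, dist_comm, dist_eq_norm]
    set σ : ℝ → ℂ := fun t => h x + (t : ℂ) * Δ with hσ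
    have hσdist : ∀ s t : ℝ, dist (σ t) (σ s) = |t - s| * d := by
      intro s t
      rw [dist_eq_norm]
      have : σ t - σ s = ((t : ℂ) - (s : ℂ)) * Δ := by simp [hσ]; ring
      rw [this, norm_mul, hΔnorm]
      rw [← Complex.ofReal_sub, Complex.norm_real, Real.norm_eq_abs]
    set C : ℝ := (1 + ε) / m with hC
    have hCpos : 0 < C := by positivity
    have hCdL : C * d = (1 + ε) * L := by rw [hC, hL]; ring
    set ρ : ℝ := R + (1 + ε) * L with hρ
    set K : Set ℂ := Metric.closedBall z ρ with hK
    have hKball : K ⊆ Metric.ball z (2 * R) := by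
      apply Metric.closedBall_subset_ball; rw [hρ]; linarith
    set A : Set ℝ := {t : ℝ | t ∈ Set.Icc (0:ℝ) 1 ∧
      ∃ w ∈ K, dist w x ≤ C * (t * d) ∧ h w = σ t} with hA
    have hA0 : (0:ℝ) ∈ A := by
      refine ⟨⟨le_refl _, zero_le_one⟩, x, ?_, ?_, ?_⟩
      · rw [hK, Metric.mem_closedBall]
        have : (0:ℝ) ≤ (1 + ε) * L := by positivity
        rw [hρ]; linarith
      · simp
      · simp [hσ]
    have hAbdd : BddAbove A := ⟨1, fun t ht => ht.1.2⟩
    have hAne : A.Nonempty := ⟨0, hA0⟩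
    -- closedness of A
    have hAclosed : IsClosed A := by
      apply IsSeqClosed.isClosed
      intro tn t htn hlim
      choose w hwK hwd hwh using fun n => (htn n).2
      obtain ⟨w0, hw0K, φ, hφ, hwlim⟩ := (isCompact_closedBall z ρ).tendsto_subseq hwK
      have hlimφ : Filter.Tendsto (tn ∘ φ) Filter.atTop (nhds t) :=
        hlim.comp hφ.tendsto_atTop
      refine ⟨isClosed_Icc.mem_of_tendsto hlim (Filter.Eventually.of_forall fun n => (htn n).1),
        w0, hw0K, ?_, ?_⟩
      · have h1 : Filter.Tendsto (fun n => dist (w (φ n)) x) Filter.atTop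
            (nhds (dist w0 x)) := ((continuous_id.dist continuous_const).tendsto w0).comp hwlim
        have h2 : Filter.Tendsto (fun n => C * (tn (φ n) * d)) Filter.atTop
            (nhds (C * (t * d))) := by
          exact (continuous_const.mul ((continuous_id.mul continuous_const))).tendsto t |>.comp hlimφ
        exact le_of_tendsto_of_tendsto' h1 h2 fun n => hwd (φ n)
      · have hcw : ContinuousAt h w0 := by
          have : DifferentiableAt ℂ h w0 :=
            hana.differentiableAt (Metric.isOpen_ball.mem_nhds (hKball hw0K))
          exact this.continuousAt
        have h1 : Filter.Tendsto (fun n => h (w (φ n))) Filter.atTop (nhds (h w0)) :=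
          hcw.tendsto.comp hwlim
        have h2 : Filter.Tendsto (fun n => σ (tn (φ n))) Filter.atTop (nhds (σ t)) := by
          have hcσ : Continuous σ := by
            rw [hσ]; continuity
          exact (hcσ.tendsto t).comp hlimφ
        have : (fun n => h (w (φ n))) = fun n => σ (tn (φ n)) := funext fun n => hwh (φ n)
        rw [this] at h1
        exact tendsto_nhds_unique h1 h2
    set T : ℝ := sSup A with hT
    have hTA : T ∈ A := hAclosed.csSup_mem hAne hAbdd
    have hT1 : T ≤ 1 := csSup_le hAne fun t ht => ht.1.2
    have hT0 : 0 ≤ T := le_csSup hAbdd hA0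
    -- claim: T = 1
    have hTeq : T = 1 := by
      by_contra hne1
      have hTlt : T < 1 := lt_of_le_of_ne hT1 hne1
      obtain ⟨hTIcc, w, hwK, hwd, hwh⟩ := hTA
      have hwball : w ∈ Metric.ball z (2 * R) := hKball hwK
      obtain ⟨p, hp⟩ := hana.analyticAt (Metric.isOpen_ball.mem_nhds hwball)
      have hs : HasStrictDerivAt h (deriv h w) w := hp.deriv ▸ hp.hasStrictDerivAt
      have hder0 : deriv h w ≠ 0 := by
        intro h0
        have := hlow w hwball
        rw [h0, norm_zero] at this
        linarith
      have hmw : ‖deriv h w‖⁻¹ ≤ m⁻¹ := by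
        apply inv_anti₀ hm (hlow w hwball)
      -- local inverse (packaged existentially to keep the context small)
      obtain ⟨g, hgd, hgw, hgr⟩ : ∃ g : ℂ → ℂ, HasStrictDerivAt g (deriv h w)⁻¹ (h w) ∧
          g (h w) = w ∧ ∀ᶠ v in nhds (h w), h (g v) = v :=
        ⟨hs.localInverse h (deriv h w) w hder0, hs.to_localInverse hder0,
          (hs.hasStrictFDerivAt_equiv hder0).localInverse_apply_image,
          (hs.hasStrictFDerivAt_equiv hder0).eventually_right_inverse⟩
      have hlo : ∀ᶠ v in nhds (h w), ‖g v - g (h w) - (v - h w) • (deriv h w)⁻¹‖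
          ≤ (ε / m) * ‖v - h w‖ := by
        have := hasDerivAt_iff_isLittleO.mp hgd.hasDerivAt
        exact (Asymptotics.isLittleO_iff.mp this) (by positivity)
      obtain ⟨δ, hδpos, hδ⟩ := Metric.eventually_nhds_iff.mp (hgr.and hlo)
      -- choose step η
      set η : ℝ := min (1 - T) (δ / (2 * d)) with hη
      have hηpos : 0 < η := by
        apply lt_min (by linarith) (by positivity)
      have hηT : T + η ≤ 1 := by
        have := min_le_left (1 - T) (δ / (2 * d)); simp only [hη]; linarith
      have hηd : η * d < δ := by
        have h1 : η ≤ δ / (2 * d) := min_le_right _ _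
        have : η * d ≤ δ / 2 := by
          calc η * d ≤ (δ / (2 * d)) * d := by nlinarith
          _ = δ / 2 := by field_simp
        linarith
      set t : ℝ := T + η with ht
      set v : ℂ := σ t with hv
      have hσT : h w = σ T := hwh
      have hvw : dist v (h w) = η * d := by
        rw [hσT, hv, hσdist T t, ht]
        congr 1
        rw [abs_of_nonneg (by linarith : (0:ℝ) ≤ T + η - T)]
        ring
      have hvδ : dist v (h w) < δ := by rw [hvw]; exact hηd
      obtain ⟨hright, hlip⟩ := hδ hvδ
      set w' : ℂ := g v with hw'
      have hw'h : h w' = σ t := hright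
      have hw'w : dist w' w ≤ C * (η * d) := by
        have h4 : ‖v - h w‖ = η * d := by rw [← dist_eq_norm]; exact hvw
        have h3 : ‖(v - h w) • (deriv h w)⁻¹‖ ≤ m⁻¹ * (η * d) := by
          rw [norm_smul, norm_inv, h4, mul_comm]
          gcongr
        have h1 : ‖w' - g (h w) - (v - h w) • (deriv h w)⁻¹‖ ≤ ε / m * (η * d) := by
          rw [← h4]; exact hlip
        have h2 : ‖w' - w‖ ≤ ε / m * (η * d) + m⁻¹ * (η * d) := by
          have heq : w' - w = (w' - g (h w) - (v - h w) • (deriv h w)⁻¹)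
              + (v - h w) • (deriv h w)⁻¹ := by rw [hgw]; ring
          rw [heq]
          exact le_trans (norm_add_le _ _) (add_le_add h1 h3)
        rw [dist_eq_norm]
        calc ‖w' - w‖ ≤ ε / m * (η * d) + m⁻¹ * (η * d) := h2
        _ = C * (η * d) := by rw [hC]; field_simp; ring
      have hw'x : dist w' x ≤ C * (t * d) := by
        calc dist w' x ≤ dist w' w + dist w x := dist_triangle _ _ _
        _ ≤ C * (η * d) + C * (T * d) := by gcongr
        _ = C * (t * d) := by rw [ht]; ring
      have hw'K : w' ∈ K := by
        rw [hK, Metric.mem_closedBall]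
        calc dist w' z ≤ dist w' x + dist x z := dist_triangle _ _ _
        _ ≤ C * (t * d) + R := by gcongr
        _ ≤ C * d + R := by
          have h5 : t * d ≤ 1 * d := mul_le_mul_of_nonneg_right hηT hd0
          have h6 : C * (t * d) ≤ C * (1 * d) := mul_le_mul_of_nonneg_left h5 hCpos.le
          have h7 : C * (1 * d) = C * d := by ring
          linarith
        _ = ρ := by rw [hρ, hCdL]; ring
      have htA : t ∈ A := ⟨⟨by linarith, hηT⟩, w', hw'K, hw'x, hw'h⟩
      have : t ≤ T := le_csSup hAbdd htA
      rw [ht] at this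
      linarith
    -- conclusion from T = 1
    rw [hTeq] at hTA
    obtain ⟨_, w, hwK, hwd, hwh⟩ := hTA
    have hwy : w = y := by
      apply hinj (hKball hwK) hyball
      rw [hwh, hσ]
      simp [hΔ]
    rw [hwy] at hwd
    calc dist x y = dist y x := dist_comm x y
    _ ≤ C * (1 * d) := hwd
    _ = (1 + ε) * L := by rw [one_mul, hCdL]
  -- pass to the limit ε → 0
  have : ∀ δ : ℝ, 0 < δ → dist x y ≤ L + δ := by
    intro δ hδ
    set ε : ℝ := min (δ / L) ((R - L) / (2 * L)) with hε
    have hεpos : 0 < ε := by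
      apply lt_min (by positivity) (by apply div_pos (by linarith) (by positivity))
    have h1 : (1 + ε) * L < R := by
      have h2 : ε ≤ (R - L) / (2 * L) := min_le_right _ _
      have : ε * L ≤ (R - L) / 2 := by
        calc ε * L ≤ ((R - L) / (2 * L)) * L := by nlinarith
        _ = (R - L) / 2 := by field_simp
      nlinarith
    have h3 := main ε hεpos h1
    have h4 : ε * L ≤ δ := by
      have : ε ≤ δ / L := min_le_left _ _
      calc ε * L ≤ (δ / L) * L := by nlinarith
      _ = δ := by field_simp
    nlinarith
  exact le_of_forall_pos_le_add this

/-- Koebe-type distortion estimate: if `h` is analytic and injective on `B(z,2R)` with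
distortion bounded by `D`, and `U ∋ z` is a connected open set of diameter at most `R`
inside `B(z,2R)`, then `diam U ≤ D |h'(z)|⁻¹ diam (h U)`, i.e.
`|h'(z)| · diam U ≤ D · diam (h U)`. -/
theorem diam_le_of_bounded_distortion
    (z : ℂ) (R : ℝ) (hR : 0 < R) (h : ℂ → ℂ) (D : ℝ)
    (hana : DifferentiableOn ℂ h (Metric.ball z (2 * R)))
    (hinj : Set.InjOn h (Metric.ball z (2 * R)))
    (U : Set ℂ) (hUopen : IsOpen U) (hUconn : IsPreconnected U) (hzU : z ∈ U)
    (hUsub : U ⊆ Metric.ball z (2 * R)) (hUdiam : Metric.diam U ≤ R)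
    (hdist : ∀ x ∈ Metric.ball z (2 * R), ∀ y ∈ Metric.ball z (2 * R),
      ‖deriv h x‖ ≤ D * ‖deriv h y‖) :
    ‖deriv h z‖ * Metric.diam U ≤ D * Metric.diam (h '' U) := by
  have hR2 : R < 2 * R := by linarith
  have hzball : z ∈ Metric.ball z (2 * R) := Metric.mem_ball_self (by linarith)
  have hz1ball : z + R ∈ Metric.ball z (2 * R) := by
    simp only [Metric.mem_ball, dist_eq_norm, add_sub_cancel_left]
    rw [Complex.norm_real, Real.norm_eq_abs, abs_of_pos hR]
    exact hR2
  -- h is non-constant, so some derivative is nonzero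
  have hnc : ∃ w ∈ Metric.ball z (2 * R), deriv h w ≠ 0 := by
    by_contra hcon
    push_neg at hcon
    have hconst : h z = h (z + R) := by
      apply (convex_ball z (2 * R)).is_const_of_fderivWithin_eq_zero hana ?_ hzball hz1ball
      intro w hw
      rw [fderivWithin_of_isOpen Metric.isOpen_ball hw]
      ext u
      simp [← toSpanSingleton_deriv, hcon w hw]
    have : z = z + R := hinj hzball hz1ball hconst
    have : (R : ℂ) = 0 := by linear_combination -this
    rw [Complex.ofReal_eq_zero] at this
    linarith
  obtain ⟨w₀, hw₀, hw₀ne⟩ := hnc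
  have hw₀pos : 0 < ‖deriv h w₀‖ := norm_pos_iff.mpr hw₀ne
  have hD1 : 1 ≤ D := by
    have := hdist w₀ hw₀ w₀ hw₀
    nlinarith
  have hD0 : 0 < D := by linarith
  have hzne : deriv h z ≠ 0 := by
    intro h0
    have := hdist w₀ hw₀ z hzball
    rw [h0, norm_zero, mul_zero] at this
    linarith
  have hzpos : 0 < ‖deriv h z‖ := norm_pos_iff.mpr hzne
  set m : ℝ := ‖deriv h z‖ / D with hm
  have hmpos : 0 < m := by positivity
  have hlow : ∀ w ∈ Metric.ball z (2 * R), m ≤ ‖deriv h w‖ := by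
    intro w hw
    rw [hm, div_le_iff₀ hD0]
    have := hdist z hzball w hw
    linarith [this, mul_comm D ‖deriv h w‖]
  -- U is bounded and contained in the closed ball of radius R
  have hUbdd : Bornology.IsBounded U := Metric.isBounded_ball.subset hUsub
  have hUcb : ∀ u ∈ U, dist u z ≤ R := fun u hu =>
    le_trans (Metric.dist_le_diam_of_mem hUbdd hu hzU) hUdiam
  -- the image is bounded
  have himgbdd : Bornology.IsBounded (h '' U) := by
    apply Bornology.IsBounded.subset ?_ (Set.image_mono (fun u hu => hUcb u hu))
    exact ((isCompact_closedBall z R).image_of_continuousOn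
      (hana.continuousOn.mono (Metric.closedBall_subset_ball hR2))).isBounded
  -- per-pair estimate
  have hpair : ∀ x ∈ U, ∀ y ∈ U, dist x y ≤ m⁻¹ * Metric.diam (h '' U) := by
    intro x hx y hy
    have hkey := key_dist_le z R hR h m hmpos hana hinj hlow x y (hUcb x hx) (hUcb y hy)
      (le_trans (Metric.dist_le_diam_of_mem hUbdd hx hy) hUdiam)
    have himg : dist (h x) (h y) ≤ Metric.diam (h '' U) :=
      Metric.dist_le_diam_of_mem himgbdd (Set.mem_image_of_mem h hx)
        (Set.mem_image_of_mem h hy)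
    rw [le_inv_mul_iff₀ hmpos]
    exact le_trans hkey himg
  have hdiamU : Metric.diam U ≤ m⁻¹ * Metric.diam (h '' U) :=
    Metric.diam_le_of_forall_dist_le (by positivity) hpair
  have : m * Metric.diam U ≤ Metric.diam (h '' U) := by
    rw [← le_inv_mul_iff₀ hmpos]
    exact hdiamU
  calc ‖deriv h z‖ * Metric.diam U = D * (m * Metric.diam U) := by
        rw [hm]; field_simp
  _ ≤ D * Metric.diam (h '' U) := by gcongr
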